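/- Let Y = ΨD + W with D block-sparse supported on Ω_T, |Ω_T| ≤ P, and Ω̃ a block-index set with |Ω̃| ≤ P, and R = (I − Ψ_{Ω̃}Ψ_{Ω̃}^†)Y. If δ_P + δ_{2P} < 1 then ‖R‖_F ≥ ((1 − δ_P − δ_{2P})/√(1 − δ_P)) · ‖D_{Ω_T∖Ω̃}‖_F − ‖W‖_F. -/

import Mathlib

open scoped BigOperators
open Matrix
noncomputable section

variable {Np M L R : ℕ}

/-- Frobenius norm of a complex matrix. -/
def frob {m n : Type*} [Fintype m] [Fintype n] (A : Matrix m n ℂ) : ℝ :=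
  Real.sqrt (∑ i, ∑ j, ‖A i j‖ ^ 2)

/-- `D` is block-supported on the block-index set `Ω`. -/
def SuppOn (Ω : Finset (Fin L)) (D : Matrix (Fin L × Fin M) (Fin R) ℂ) : Prop :=
  ∀ p r, p.1 ∉ Ω → D p r = 0

/-- Column-block submatrix `Ψ_Ω` of `Ψ`. -/
def bsub (Ψ : Matrix (Fin Np) (Fin L × Fin M) ℂ) (Ω : Finset (Fin L)) :
    Matrix (Fin Np) ({l // l ∈ Ω} × Fin M) ℂ :=
  Ψ.submatrix id (fun q => ((q.1 : Fin L), q.2))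

/-- Row-block submatrix `D_Ω` of `D`. -/
def rsub (D : Matrix (Fin L × Fin M) (Fin R) ℂ) (Ω : Finset (Fin L)) :
    Matrix ({l // l ∈ Ω} × Fin M) (Fin R) ℂ :=
  D.submatrix (fun q => ((q.1 : Fin L), q.2)) id

/-- Moore–Penrose pseudoinverse `Ψ_Ω^† = (Ψ_Ωᴴ Ψ_Ω)⁻¹ Ψ_Ωᴴ` of the column-block submatrix. -/
def bpinv (Ψ : Matrix (Fin Np) (Fin L × Fin M) ℂ) (Ω : Finset (Fin L)) :
    Matrix ({l // l ∈ Ω} × Fin M) (Fin Np) ℂ :=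
  ((bsub Ψ Ω)ᴴ * bsub Ψ Ω)⁻¹ * (bsub Ψ Ω)ᴴ

/-- Re-embed a matrix indexed by the blocks of `Ω` as a full `ML × R` matrix, zero outside `Ω`. -/
def expand (Ω : Finset (Fin L)) (X : Matrix ({l // l ∈ Ω} × Fin M) (Fin R) ℂ) :
    Matrix (Fin L × Fin M) (Fin R) ℂ :=
  fun p r => if h : p.1 ∈ Ω then X (⟨p.1, h⟩, p.2) r else 0

/-- Structured (block) RIP of order `P` with constant `δ`. -/
def SRIP (Ψ : Matrix (Fin Np) (Fin L × Fin M) ℂ) (P : ℕ) (δ : ℝ) : Prop :=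
  ∀ Ω : Finset (Fin L), Ω.card ≤ P →
    ∀ D : Matrix (Fin L × Fin M) (Fin R) ℂ, SuppOn Ω D →
      (1 - δ) * frob D ^ 2 ≤ frob (Ψ * D) ^ 2 ∧ frob (Ψ * D) ^ 2 ≤ (1 + δ) * frob D ^ 2

/- ===== auxiliary lemmas ===== -/

lemma frob_nonneg {m n : Type*} [Fintype m] [Fintype n] (A : Matrix m n ℂ) : 0 ≤ frob A :=
  Real.sqrt_nonneg _

lemma frob_sq {m n : Type*} [Fintype m] [Fintype n] (A : Matrix m n ℂ) :
    frob A ^ 2 = ∑ i, ∑ j, ‖A i j‖ ^ 2 :=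
  Real.sq_sqrt (Finset.sum_nonneg fun _ _ => Finset.sum_nonneg fun _ _ => sq_nonneg _)

lemma le_of_sq_le_sq' {x y : ℝ} (hx : 0 ≤ x) (hy : 0 ≤ y) (h : x ^ 2 ≤ y ^ 2) : x ≤ y := by
  nlinarith

def toE {m n : Type*} [Fintype m] [Fintype n] (A : Matrix m n ℂ) : EuclideanSpace ℂ (m × n) :=
  WithLp.toLp 2 (fun p : m × n => A p.1 p.2)

lemma toE_add {m n : Type*} [Fintype m] [Fintype n] (A B : Matrix m n ℂ) :
    toE (A + B) = toE A + toE B := rfl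

lemma frob_eq_norm {m n : Type*} [Fintype m] [Fintype n] (A : Matrix m n ℂ) :
    frob A = ‖toE A‖ := by
  rw [EuclideanSpace.norm_eq, frob]
  congr 1
  rw [Fintype.sum_prod_type]
  rfl

lemma inner_toE {m n : Type*} [Fintype m] [Fintype n] (A B : Matrix m n ℂ) :
    (inner ℂ (toE A) (toE B) : ℂ) = (Aᴴ * B).trace := by
  simp only [PiLp.inner_apply, RCLike.inner_apply, toE, WithLp.ofLp_toLp, Matrix.trace, Matrix.diag,
    Matrix.mul_apply, Matrix.conjTranspose_apply, Finset.sum_comm (γ := m)]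
  rw [Fintype.sum_prod_type]
  simp [RCLike.star_def, Finset.sum_comm (γ := n)]
  exact Finset.sum_congr rfl fun _ _ => Finset.sum_congr rfl fun _ _ => mul_comm _ _

lemma sum_expand {β : Type*} [AddCommMonoid β] (Ω : Finset (Fin L))
    (g : (Fin L × Fin M) → β) (h0 : ∀ p, p.1 ∉ Ω → g p = 0) :
    ∑ p : Fin L × Fin M, g p = ∑ q : {l // l ∈ Ω} × Fin M, g (q.1.1, q.2) := by
  rw [Fintype.sum_prod_type, Fintype.sum_prod_type]
  rw [show (∑ s : {l // l ∈ Ω}, ∑ m, g (s.1, m)) = ∑ l ∈ Ω, ∑ m, g (l, m) from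
    Finset.sum_coe_sort Ω (fun l => ∑ m, g (l, m))]
  refine (Finset.sum_subset (Finset.subset_univ Ω) ?_).symm
  intro l _ hl
  exact Finset.sum_eq_zero fun m _ => h0 (l, m) hl

lemma mul_expand (Ψ : Matrix (Fin Np) (Fin L × Fin M) ℂ) (Ω : Finset (Fin L))
    (X : Matrix ({l // l ∈ Ω} × Fin M) (Fin R) ℂ) :
    Ψ * expand Ω X = bsub Ψ Ω * X := by
  ext i r
  rw [Matrix.mul_apply, Matrix.mul_apply]
  rw [sum_expand Ω (fun p => Ψ i p * expand Ω X p r) (fun p hp => by simp [expand, hp])]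
  refine Finset.sum_congr rfl fun q _ => ?_
  simp [expand, bsub, q.1.2]

lemma frob_expand (Ω : Finset (Fin L)) (X : Matrix ({l // l ∈ Ω} × Fin M) (Fin R) ℂ) :
    frob (expand Ω X) = frob X := by
  rw [frob, frob]
  congr 1
  rw [sum_expand Ω (fun p => ∑ r, ‖expand Ω X p r‖ ^ 2)
    (fun p hp => by simp [expand, hp])]
  refine Finset.sum_congr rfl fun q _ => Finset.sum_congr rfl fun r _ => ?_
  simp [expand, q.1.2]

lemma expand_rsub (Ω : Finset (Fin L)) (D : Matrix (Fin L × Fin M) (Fin R) ℂ)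
    (hD : SuppOn Ω D) : expand Ω (rsub D Ω) = D := by
  ext p r
  by_cases h : p.1 ∈ Ω
  · simp [expand, rsub, h]
  · simp [expand, h, (hD p r h).symm]

lemma frob_proj_le {n : Type*} [Fintype n] (Q : Matrix (Fin Np) (Fin Np) ℂ)
    (hH : Qᴴ = Q) (hI : Q * Q = Q) (W : Matrix (Fin Np) n ℂ) :
    frob ((1 - Q) * W) ≤ frob W := by
  have hQ0 : Q * (1 - Q) = 0 := by rw [mul_sub, mul_one, hI, sub_self]
  have hcross : (inner ℂ (toE (Q * W)) (toE ((1 - Q) * W)) : ℂ) = 0 := by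
    rw [inner_toE, Matrix.conjTranspose_mul, hH]
    have h0 : Wᴴ * Q * ((1 - Q) * W) = 0 := by
      rw [Matrix.mul_assoc Wᴴ Q, ← Matrix.mul_assoc Q, hQ0, Matrix.zero_mul, Matrix.mul_zero]
    rw [h0, Matrix.trace_zero]
  have hsplit : toE (Q * W) + toE ((1 - Q) * W) = toE W := by
    rw [← toE_add]
    congr 1
    rw [← Matrix.add_mul]
    rw [show Q + (1 - Q) = 1 by abel, Matrix.one_mul]
  have hpyth := norm_add_sq (𝕜 := ℂ) (toE (Q * W)) (toE ((1 - Q) * W))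
  rw [hsplit, hcross] at hpyth
  simp only [map_zero, mul_zero, add_zero] at hpyth
  rw [frob_eq_norm, frob_eq_norm]
  refine le_of_sq_le_sq' (norm_nonneg _) (norm_nonneg _) ?_
  nlinarith [sq_nonneg ‖toE (Q * W)‖]

lemma gram_det_isUnit (Ψ : Matrix (Fin Np) (Fin L × Fin M) ℂ) (P : ℕ) (δP : ℝ)
    (hRIP : SRIP (R := R) Ψ P δP) (hδ : δP < 1) (hR : 0 < R)
    (Ω : Finset (Fin L)) (hc : Ω.card ≤ P) :
    IsUnit ((bsub Ψ Ω)ᴴ * bsub Ψ Ω).det := by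
  set B := bsub Ψ Ω with hB
  rw [isUnit_iff_ne_zero]
  intro hdet
  obtain ⟨v, hv, hGv⟩ := (Matrix.exists_mulVec_eq_zero_iff).mpr hdet
  set Xv : Matrix ({l // l ∈ Ω} × Fin M) (Fin R) ℂ := fun q _ => v q with hXv
  have hsupp : SuppOn Ω (expand Ω Xv) := fun p r hp => dif_neg hp
  have hrip := (hRIP Ω hc (expand Ω Xv) hsupp).1
  have hnorm : ∀ z : ℂ, (starRingEnd ℂ) z * z = ((‖z‖ ^ 2 : ℝ) : ℂ) := by
    intro z
    rw [mul_comm, Complex.mul_conj, Complex.normSq_eq_norm_sq]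
  -- ‖B v‖² = 0
  have hBv : (∑ i, ‖(B.mulVec v) i‖ ^ 2) = 0 := by
    have h1 : ((∑ i, ‖(B.mulVec v) i‖ ^ 2 : ℝ) : ℂ)
        = star (B.mulVec v) ⬝ᵥ (B.mulVec v) := by
      rw [dotProduct, Complex.ofReal_sum]
      refine Finset.sum_congr rfl fun i _ => ?_
      rw [Pi.star_apply]
      exact (hnorm _).symm
    have h2 : star (B.mulVec v) ⬝ᵥ (B.mulVec v) = star v ⬝ᵥ ((Bᴴ * B).mulVec v) := by
      rw [← Matrix.mulVec_mulVec, Matrix.dotProduct_mulVec (star v) Bᴴ,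
        ← Matrix.star_mulVec]
    rw [h2, hGv, dotProduct_zero] at h1
    exact_mod_cast h1
  -- frobenius computations
  have hfD : frob (expand Ω Xv) ^ 2 = (R : ℝ) * ∑ q, ‖v q‖ ^ 2 := by
    rw [frob_expand, frob_sq]
    simp [hXv, Finset.mul_sum, mul_comm]
  have hfPD : frob (Ψ * expand Ω Xv) ^ 2 = (R : ℝ) * ∑ i, ‖(B.mulVec v) i‖ ^ 2 := by
    rw [mul_expand, ← hB, frob_sq]
    have : ∀ i r, (B * Xv) i r = (B.mulVec v) i := by
      intro i r
      rw [Matrix.mul_apply]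
      simp [Matrix.mul_apply, hXv, Matrix.mulVec, dotProduct]
    simp only [this]
    simp [Finset.mul_sum, mul_comm]
  rw [hfPD, hBv, mul_zero, hfD] at hrip
  have hs : (0 : ℝ) ≤ ∑ q, ‖v q‖ ^ 2 := Finset.sum_nonneg fun _ _ => sq_nonneg _
  have hR' : (0 : ℝ) < (R : ℝ) := by exact_mod_cast hR
  have hzero : ∑ q, ‖v q‖ ^ 2 = 0 := by
    by_contra hne
    have hpos : 0 < ∑ q, ‖v q‖ ^ 2 := lt_of_le_of_ne hs (Ne.symm hne)
    nlinarith [mul_pos (show (0:ℝ) < 1 - δP by linarith) (mul_pos hR' hpos)]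
  apply hv
  funext q
  have := (Finset.sum_eq_zero_iff_of_nonneg (fun q _ => sq_nonneg ‖v q‖)).mp hzero q
    (Finset.mem_univ q)
  simpa using this


set_option maxHeartbeats 1000000

/-- residual lower bound
`‖R‖_F ≥ ((1 − δ_P − δ_{2P})/√(1 − δ_P)) ‖D_{Ω_T∖Ω̃}‖_F − ‖W‖_F`. -/
theorem residual_lower_bound
    (Ψ : Matrix (Fin Np) (Fin L × Fin M) ℂ) (P : ℕ) (δP δ2P : ℝ)
    (hRIP_P : SRIP (R := R) Ψ P δP) (hRIP_2P : SRIP (R := R) Ψ (2 * P) δ2P)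
    (hmono : δP ≤ δ2P) (hδsum : δP + δ2P < 1)
    (ΩT Ωtil : Finset (Fin L)) (hcT : ΩT.card ≤ P) (hctil : Ωtil.card ≤ P)
    (D : Matrix (Fin L × Fin M) (Fin R) ℂ) (hD : SuppOn ΩT D)
    (W Y Res : Matrix (Fin Np) (Fin R) ℂ)
    (hY : Y = Ψ * D + W)
    (hRes : Res = (1 - bsub Ψ Ωtil * bpinv Ψ Ωtil) * Y) :
    ((1 - δP - δ2P) / Real.sqrt (1 - δP)) * frob (rsub D (ΩT \ Ωtil)) - frob W ≤
      frob Res := by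
  set Ω' : Finset (Fin L) := ΩT \ Ωtil with hΩ'
  have hf0 : 0 ≤ frob (rsub D Ω') := frob_nonneg _
  by_cases hf : frob (rsub D Ω') = 0
  · rw [hf, mul_zero, zero_sub]
    linarith [frob_nonneg W, frob_nonneg Res]
  -- nontrivial case
  have hδP1 : δP < 1 := by linarith
  -- R is positive
  have hR : 0 < R := by
    rcases Nat.eq_zero_or_pos R with h0 | h0
    · exfalso; apply hf; subst h0; simp [frob]
    · exact h0
  set D1 : Matrix (Fin L × Fin M) (Fin R) ℂ := expand Ω' (rsub D Ω') with hD1def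
  have hfD1 : frob D1 = frob (rsub D Ω') := frob_expand _ _
  have hs1 : SuppOn Ω' D1 := fun p r hp => dif_neg hp
  have hcΩ' : Ω'.card ≤ P := le_trans (Finset.card_le_card Finset.sdiff_subset) hcT
  have hlow := hRIP_P Ω' hcΩ' D1 hs1
  have hlow2 := hRIP_2P Ω' (le_trans hcΩ' (by omega)) D1 hs1
  have hfD1pos : 0 < frob D1 ^ 2 := by
    rw [hfD1]; exact pow_pos (lt_of_le_of_ne hf0 (Ne.symm hf)) 2
  have hδP0 : 0 ≤ δP := by nlinarith [hlow.1, hlow.2]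
  have hδ2P0 : 0 ≤ δ2P := by nlinarith [hlow2.1, hlow2.2]
  -- Gram matrix invertible
  set B := bsub Ψ Ωtil with hB
  set G := Bᴴ * B with hG
  have hGu : IsUnit G.det := gram_det_isUnit Ψ P δP hRIP_P hδP1 hR Ωtil hctil
  have hGinv : G⁻¹ * G = 1 := Matrix.nonsing_inv_mul G hGu
  have hpinv : bpinv Ψ Ωtil = G⁻¹ * Bᴴ := rfl
  set Q := B * bpinv Ψ Ωtil with hQ
  have hQeq : Q = B * (G⁻¹ * Bᴴ) := by rw [hQ, hpinv]
  have hQB : Q * B = B := by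
    rw [hQeq, Matrix.mul_assoc, Matrix.mul_assoc, ← hG]
    rw [show G⁻¹ * (Bᴴ * B) = G⁻¹ * G from by rw [hG], hGinv, Matrix.mul_one]
  have hQH : Qᴴ = Q := by
    rw [hQeq, Matrix.conjTranspose_mul, Matrix.conjTranspose_mul,
      Matrix.conjTranspose_nonsing_inv, Matrix.conjTranspose_conjTranspose]
    have : Gᴴ = G := by
      rw [hG, Matrix.conjTranspose_mul, Matrix.conjTranspose_conjTranspose]
    rw [this, Matrix.mul_assoc]
  have hQQ : Q * Q = Q := by
    rw [hQeq, ← Matrix.mul_assoc, ← hQeq, hQB, hQeq]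
  -- decomposition
  set D2 : Matrix (Fin L × Fin M) (Fin R) ℂ := D - D1 with hD2def
  have hs2 : SuppOn Ωtil D2 := by
    intro p r hp
    rw [hD2def, Matrix.sub_apply]
    by_cases hT : p.1 ∈ ΩT
    · have hΩ'mem : p.1 ∈ Ω' := Finset.mem_sdiff.mpr ⟨hT, hp⟩
      rw [hD1def]
      simp [expand, rsub, hΩ'mem]
    · rw [hD (p) r hT, hD1def]
      have : p.1 ∉ Ω' := fun hc => hT (Finset.mem_sdiff.mp hc).1
      simp [expand, this]
  have hQPsiD2 : (1 - Q) * (Ψ * D2) = 0 := by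
    rw [← expand_rsub Ωtil D2 hs2, mul_expand, ← hB, ← Matrix.mul_assoc,
      Matrix.sub_mul, Matrix.one_mul, hQB, sub_self, Matrix.zero_mul]
  set E : Matrix (Fin L × Fin M) (Fin R) ℂ := expand Ωtil ((G⁻¹ * Bᴴ) * (Ψ * D1)) with hEdef
  have hRes2 : Res = Ψ * (D1 - E) + (1 - Q) * W := by
    rw [hRes, hY]
    have hDsplit : D = D1 + D2 := by rw [hD2def]; abel
    rw [hDsplit, Matrix.mul_add, Matrix.mul_add, Matrix.mul_add, hQPsiD2, add_zero]
    congr 1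
    have hQPsiD1 : Q * (Ψ * D1) = Ψ * E := by
      rw [hEdef, mul_expand Ψ Ωtil (G⁻¹ * Bᴴ * (Ψ * D1)), ← hB, hQeq, Matrix.mul_assoc]
    rw [Matrix.sub_mul, Matrix.one_mul, hQPsiD1, ← Matrix.mul_sub]
  -- RIP on D1 - E
  have hsDE : SuppOn (Ω' ∪ Ωtil) (D1 - E) := by
    intro p r hp
    rw [Finset.mem_union] at hp
    push_neg at hp
    rw [Matrix.sub_apply, hs1 p r hp.1, hEdef]
    simp [expand, hp.2]
  have hcard : (Ω' ∪ Ωtil).card ≤ 2 * P :=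
    le_trans (Finset.card_union_le _ _) (by omega)
  have hrip := (hRIP_2P _ hcard _ hsDE).1
  have hDisj : frob D1 ^ 2 ≤ frob (D1 - E) ^ 2 := by
    rw [frob_sq, frob_sq]
    refine Finset.sum_le_sum fun p _ => Finset.sum_le_sum fun r _ => ?_
    by_cases hp : p.1 ∈ Ωtil
    · have hd1 : D1 p r = 0 := hs1 p r (fun hc => (Finset.mem_sdiff.mp hc).2 hp)
      rw [Matrix.sub_apply, hd1]
      simp
    · have hE : E p r = 0 := by rw [hEdef]; simp [expand, hp]
      rw [Matrix.sub_apply, hE, sub_zero]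
  have hδ2P1 : (0:ℝ) ≤ 1 - δ2P := by linarith
  have hmain : Real.sqrt (1 - δ2P) * frob D1 ≤ frob (Ψ * (D1 - E)) := by
    refine le_of_sq_le_sq' (mul_nonneg (Real.sqrt_nonneg _) (frob_nonneg _))
      (frob_nonneg _) ?_
    rw [mul_pow, Real.sq_sqrt hδ2P1]
    calc (1 - δ2P) * frob D1 ^ 2 ≤ (1 - δ2P) * frob (D1 - E) ^ 2 :=
          mul_le_mul_of_nonneg_left hDisj hδ2P1
      _ ≤ frob (Ψ * (D1 - E)) ^ 2 := hrip
  have htri : frob (Ψ * (D1 - E)) - frob ((1 - Q) * W) ≤ frob Res := by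
    rw [hRes2, frob_eq_norm, frob_eq_norm, frob_eq_norm, toE_add]
    have := norm_sub_le (toE (Ψ * (D1 - E)) + toE ((1 - Q) * W)) (toE ((1 - Q) * W))
    simp only [add_sub_cancel_right] at this
    linarith
  have hcontr : frob ((1 - Q) * W) ≤ frob W := frob_proj_le Q hQH hQQ W
  have hconst : (1 - δP - δ2P) / Real.sqrt (1 - δP) ≤ Real.sqrt (1 - δ2P) := by
    rw [div_le_iff₀ (Real.sqrt_pos.mpr (by linarith))]
    rw [← Real.sqrt_mul hδ2P1]
    rw [Real.le_sqrt (by linarith) (mul_nonneg hδ2P1 (by linarith))]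
    nlinarith
  have hfinal : ((1 - δP - δ2P) / Real.sqrt (1 - δP)) * frob (rsub D Ω')
      ≤ Real.sqrt (1 - δ2P) * frob D1 := by
    rw [hfD1]
    exact mul_le_mul_of_nonneg_right hconst hf0
  linarith
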